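/- For every integer d ≥ 2, the map π_c : SC_d(2,0;c) → S^{d-1} sending ((x,r),(y,s)) to (x − y)/‖x − y‖ is a well-defined continuous map and a homotopy equivalence; moreover π_c(τ(c)) = −π_c(c) for every c ∈ SC_d(2,0;c), where τ swaps the two balls. In particular the configuration space of two nonoverlapping balls in the closed unit ball of ℝ^d is homotopy equivalent to the sphere S^{d-1}. -/

import Mathlib

noncomputable section

/-- The configuration space `SC_d(2,0;c)` of two nonoverlapping balls in the closed
unit ball of `ℝ^d`. -/
def SC20c (d : ℕ) :
    Set ((EuclideanSpace ℝ (Fin d) × ℝ) × (EuclideanSpace ℝ (Fin d) × ℝ)) :=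
  {c | 0 < c.1.2 ∧ 0 < c.2.2 ∧
       ‖c.1.1‖ + c.1.2 ≤ 1 ∧ ‖c.2.1‖ + c.2.2 ≤ 1 ∧
       ‖c.1.1 - c.2.1‖ ≥ c.1.2 + c.2.2}

/-- The unit sphere `S^{d-1} = {z ∈ ℝ^d : ‖z‖ = 1}`. -/
def unitSphere (d : ℕ) : Set (EuclideanSpace ℝ (Fin d)) := {z | ‖z‖ = 1}

/-- The raw formula of the projection `π_c`, sending `((x,r),(y,s))` to `(x−y)/‖x−y‖`. -/
def rawPi (d : ℕ) :
    (EuclideanSpace ℝ (Fin d) × ℝ) × (EuclideanSpace ℝ (Fin d) × ℝ) →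
      EuclideanSpace ℝ (Fin d) :=
  fun c => ‖c.1.1 - c.2.1‖⁻¹ • (c.1.1 - c.2.1)


lemma norm_sub_pos_of_mem {d : ℕ}
    {c : (EuclideanSpace ℝ (Fin d) × ℝ) × (EuclideanSpace ℝ (Fin d) × ℝ)}
    (hc : c ∈ SC20c d) : 0 < ‖c.1.1 - c.2.1‖ :=
  lt_of_lt_of_le (by linarith [hc.1, hc.2.1]) hc.2.2.2.2

lemma rawPi_mem {d : ℕ}
    {c : (EuclideanSpace ℝ (Fin d) × ℝ) × (EuclideanSpace ℝ (Fin d) × ℝ)}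
    (hc : c ∈ SC20c d) : rawPi d c ∈ unitSphere d := by
  have h := norm_sub_pos_of_mem hc
  simp only [rawPi, unitSphere, Set.mem_setOf_eq, norm_smul, Real.norm_eq_abs, abs_inv, abs_norm]
  exact inv_mul_cancel₀ h.ne'

lemma rawPi_cont {d : ℕ} : Continuous (fun c : SC20c d => rawPi d c.1) := by
  unfold rawPi
  apply Continuous.fun_smul
  · exact (Continuous.norm (by fun_prop)).inv₀ (fun c => (norm_sub_pos_of_mem c.2).ne')
  · fun_prop

lemma iota_mem {d : ℕ} (z : unitSphere d) :
    ((((4:ℝ)⁻¹ • (z:EuclideanSpace ℝ (Fin d)), (4:ℝ)⁻¹)),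
     (((-(4:ℝ)⁻¹) • (z:EuclideanSpace ℝ (Fin d)), (4:ℝ)⁻¹))) ∈ SC20c d := by
  have hz : ‖(z:EuclideanSpace ℝ (Fin d))‖ = 1 := z.2
  have hv : (4:ℝ)⁻¹ • (z:EuclideanSpace ℝ (Fin d)) - (-(4:ℝ)⁻¹) • (z:EuclideanSpace ℝ (Fin d))
      = (2:ℝ)⁻¹ • (z:EuclideanSpace ℝ (Fin d)) := by
    rw [← sub_smul]; norm_num
  refine ⟨by norm_num, by norm_num, ?_, ?_, ?_⟩
  · simp [norm_smul, hz]; norm_num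
  · simp [norm_smul, hz]; norm_num
  · simp only [hv, norm_smul, hz]; norm_num

lemma tuple_mem {d : ℕ} (x y : EuclideanSpace ℝ (Fin d)) (r s t : ℝ)
    (ht0 : 0 ≤ t) (ht1 : t ≤ 1)
    (hc : (((x, r)), ((y, s))) ∈ SC20c d)
    (u : EuclideanSpace ℝ (Fin d)) (hu : u = rawPi d ((x, r), (y, s))) :
    ((((1 - t) • ((4:ℝ)⁻¹ • u) + t • x, (1 - t) * 4⁻¹ + t * r)),
     (((1 - t) • ((-(4:ℝ)⁻¹) • u) + t • y, (1 - t) * 4⁻¹ + t * s))) ∈ SC20c d := by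
  obtain ⟨hr, hs, hx, hy, hsep⟩ := hc
  simp only at hr hs hx hy hsep
  have ha0 : (0:ℝ) ≤ 1 - t := by linarith
  set n : ℝ := ‖x - y‖ with hn
  have hnpos : 0 < n := lt_of_lt_of_le (by linarith) hsep
  have hunorm : ‖u‖ = 1 := by rw [hu]; exact rawPi_mem ⟨hr, hs, hx, hy, hsep⟩
  have hradpos : ∀ rr : ℝ, 0 < rr → 0 < (1 - t) * 4⁻¹ + t * rr := by
    intro rr hrr
    rcases eq_or_lt_of_le ht0 with h | h
    · rw [← h]; norm_num
    · nlinarith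
  have hnormx : ‖(1 - t) • ((4:ℝ)⁻¹ • u) + t • x‖ ≤ (1 - t) * 4⁻¹ + t * ‖x‖ := by
    calc ‖(1 - t) • ((4:ℝ)⁻¹ • u) + t • x‖
        ≤ ‖(1 - t) • ((4:ℝ)⁻¹ • u)‖ + ‖t • x‖ := norm_add_le _ _
      _ = (1 - t) * 4⁻¹ + t * ‖x‖ := by
          rw [norm_smul, norm_smul, norm_smul, Real.norm_eq_abs, Real.norm_eq_abs,
            Real.norm_eq_abs, abs_of_nonneg ha0, abs_of_nonneg ht0, hunorm]
          norm_num
  have hnormy : ‖(1 - t) • ((-(4:ℝ)⁻¹) • u) + t • y‖ ≤ (1 - t) * 4⁻¹ + t * ‖y‖ := by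
    calc ‖(1 - t) • ((-(4:ℝ)⁻¹) • u) + t • y‖
        ≤ ‖(1 - t) • ((-(4:ℝ)⁻¹) • u)‖ + ‖t • y‖ := norm_add_le _ _
      _ = (1 - t) * 4⁻¹ + t * ‖y‖ := by
          rw [norm_smul, norm_smul, norm_smul, Real.norm_eq_abs, Real.norm_eq_abs,
            Real.norm_eq_abs, abs_of_nonneg ha0, abs_of_nonneg ht0, hunorm]
          norm_num
  have hsepnew :
      ‖((1 - t) • ((4:ℝ)⁻¹ • u) + t • x) - ((1 - t) • ((-(4:ℝ)⁻¹) • u) + t • y)‖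
        = (1 - t) * 2⁻¹ + t * n := by
    have hdiff :
        ((1 - t) • ((4:ℝ)⁻¹ • u) + t • x) - ((1 - t) • ((-(4:ℝ)⁻¹) • u) + t • y)
          = ((1 - t) * (2⁻¹ * n⁻¹) + t) • (x - y) := by
      have hraw : u = n⁻¹ • (x - y) := hu
      rw [hraw]; module
    have hcoef : 0 ≤ (1 - t) * (2⁻¹ * n⁻¹) + t := by positivity
    rw [hdiff, norm_smul, Real.norm_eq_abs, abs_of_nonneg hcoef, ← hn]
    field_simp
  have htx : t * ‖x‖ + t * r ≤ t := by
    calc t * ‖x‖ + t * r = t * (‖x‖ + r) := by ring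
      _ ≤ t * 1 := mul_le_mul_of_nonneg_left hx ht0
      _ = t := mul_one t
  have hty : t * ‖y‖ + t * s ≤ t := by
    calc t * ‖y‖ + t * s = t * (‖y‖ + s) := by ring
      _ ≤ t * 1 := mul_le_mul_of_nonneg_left hy ht0
      _ = t := mul_one t
  have htn : t * r + t * s ≤ t * n := by
    calc t * r + t * s = t * (r + s) := by ring
      _ ≤ t * n := mul_le_mul_of_nonneg_left hsep ht0
  have H3 : ‖(1 - t) • ((4:ℝ)⁻¹ • u) + t • x‖ + ((1 - t) * 4⁻¹ + t * r) ≤ 1 := by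
    linarith [hnormx, htx]
  have H4 : ‖(1 - t) • ((-(4:ℝ)⁻¹) • u) + t • y‖ + ((1 - t) * 4⁻¹ + t * s) ≤ 1 := by
    linarith [hnormy, hty]
  have H5 : ‖((1 - t) • ((4:ℝ)⁻¹ • u) + t • x) - ((1 - t) • ((-(4:ℝ)⁻¹) • u) + t • y)‖
        ≥ ((1 - t) * 4⁻¹ + t * r) + ((1 - t) * 4⁻¹ + t * s) := by
    rw [hsepnew]; linarith [htn]
  exact ⟨hradpos _ hr, hradpos _ hs, H3, H4, H5⟩

lemma pi_iota {d : ℕ} (z : unitSphere d) :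
    rawPi d ((((4:ℝ)⁻¹ • (z:EuclideanSpace ℝ (Fin d)), (4:ℝ)⁻¹)),
             (((-(4:ℝ)⁻¹) • (z:EuclideanSpace ℝ (Fin d)), (4:ℝ)⁻¹))) = z := by
  have hz : ‖(z:EuclideanSpace ℝ (Fin d))‖ = 1 := z.2
  have hv : (4:ℝ)⁻¹ • (z:EuclideanSpace ℝ (Fin d)) - (-(4:ℝ)⁻¹) • (z:EuclideanSpace ℝ (Fin d))
      = (2:ℝ)⁻¹ • (z:EuclideanSpace ℝ (Fin d)) := by rw [← sub_smul]; norm_num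
  simp only [rawPi, hv, norm_smul, Real.norm_eq_abs, hz, smul_smul]
  rw [show (|(2:ℝ)⁻¹| * 1)⁻¹ * 2⁻¹ = 1 by rw [abs_of_pos] <;> norm_num, one_smul]

/-- For every integer `d ≥ 2`, the map
`π_c : SC_d(2,0;c) → S^{d-1}`, `((x,r),(y,s)) ↦ (x−y)/‖x−y‖`, is well defined and
continuous, it is a homotopy equivalence, and `π_c(τ(c)) = −π_c(c)` where `τ` swaps the
two balls.  In particular `SC_d(2,0;c)` is homotopy equivalent to `S^{d-1}`. -/
theorem swissCheese_two_balls_closed_homotopy_equiv_sphere (d : ℕ) (hd : 2 ≤ d) :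
    (∀ c ∈ SC20c d, rawPi d c ∈ unitSphere d) ∧
    Continuous (fun c : SC20c d => rawPi d c.1) ∧
    (∃ h : ContinuousMap.HomotopyEquiv (SC20c d) (unitSphere d),
        ∀ c : SC20c d, (h.toFun c : EuclideanSpace ℝ (Fin d)) = rawPi d c.1) ∧
    (∀ c ∈ SC20c d, Prod.swap c ∈ SC20c d ∧ rawPi d (Prod.swap c) = - rawPi d c) := by
  refine ⟨fun c hc => rawPi_mem hc, rawPi_cont, ?_, ?_⟩
  · -- the homotopy equivalence
    set f : C(SC20c d, unitSphere d) :=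
      ⟨fun c => ⟨rawPi d c.1, rawPi_mem c.2⟩, Continuous.subtype_mk rawPi_cont _⟩ with hf
    set g : C(unitSphere d, SC20c d) :=
      ⟨fun z => ⟨((((4:ℝ)⁻¹ • (z:EuclideanSpace ℝ (Fin d)), (4:ℝ)⁻¹)),
                  (((-(4:ℝ)⁻¹) • (z:EuclideanSpace ℝ (Fin d)), (4:ℝ)⁻¹))), iota_mem z⟩,
        Continuous.subtype_mk (by fun_prop) _⟩ with hg
    have hT : Continuous fun p : unitInterval × SC20c d => (p.1 : ℝ) :=
      continuous_subtype_val.comp continuous_fst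
    have hU : Continuous fun p : unitInterval × SC20c d => rawPi d p.2.1 :=
      rawPi_cont.comp continuous_snd
    have hX : Continuous fun p : unitInterval × SC20c d => p.2.1.1.1 := by fun_prop
    have hY : Continuous fun p : unitInterval × SC20c d => p.2.1.2.1 := by fun_prop
    have hR : Continuous fun p : unitInterval × SC20c d => p.2.1.1.2 := by fun_prop
    have hS : Continuous fun p : unitInterval × SC20c d => p.2.1.2.2 := by fun_prop
    have H : ContinuousMap.Homotopy (g.comp f) (ContinuousMap.id (SC20c d)) :=
      { toFun := fun p =>
          ⟨(((1 - (p.1:ℝ)) • ((4:ℝ)⁻¹ • rawPi d p.2.1) + (p.1:ℝ) • p.2.1.1.1,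
             (1 - (p.1:ℝ)) * 4⁻¹ + (p.1:ℝ) * p.2.1.1.2),
            ((1 - (p.1:ℝ)) • ((-(4:ℝ)⁻¹) • rawPi d p.2.1) + (p.1:ℝ) • p.2.1.2.1,
             (1 - (p.1:ℝ)) * 4⁻¹ + (p.1:ℝ) * p.2.1.2.2)),
           tuple_mem _ _ _ _ _ p.1.2.1 p.1.2.2 p.2.2 _ rfl⟩
        continuous_toFun := by
          apply Continuous.subtype_mk
          refine Continuous.prodMk (Continuous.prodMk ?_ ?_) (Continuous.prodMk ?_ ?_)
          · exact (((continuous_const.fun_sub hT)).fun_smul (continuous_const.fun_smul hU)).fun_add (hT.fun_smul hX)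
          · exact ((continuous_const.fun_sub hT).fun_mul continuous_const).fun_add (hT.fun_mul hR)
          · exact (((continuous_const.fun_sub hT)).fun_smul (continuous_const.fun_smul hU)).fun_add (hT.fun_smul hY)
          · exact ((continuous_const.fun_sub hT).fun_mul continuous_const).fun_add (hT.fun_mul hS)
        map_zero_left := by
          intro c
          apply Subtype.ext
          simp [f, g]
        map_one_left := by
          intro c
          apply Subtype.ext
          simp }
    have hfg : f.comp g = ContinuousMap.id (unitSphere d) := by
      apply ContinuousMap.ext
      intro z
      apply Subtype.ext
      exact pi_iota z
    refine ⟨⟨f, g, ⟨H⟩, ?_⟩, fun c => rfl⟩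
    rw [hfg]
  · -- the swap
    rintro c ⟨hr, hs, hx, hy, hsep⟩
    refine ⟨⟨hs, hr, hy, hx, ?_⟩, ?_⟩
    · show ‖c.2.1 - c.1.1‖ ≥ c.2.2 + c.1.2
      rw [norm_sub_rev]
      linarith
    · show ‖c.2.1 - c.1.1‖⁻¹ • (c.2.1 - c.1.1) = -(‖c.1.1 - c.2.1‖⁻¹ • (c.1.1 - c.2.1))
      rw [norm_sub_rev, show c.2.1 - c.1.1 = -(c.1.1 - c.2.1) from (neg_sub _ _).symm, smul_neg]
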